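/- Let d ≥ 1 and for α ∈ (0,1) define the fractional α-perimeter of a Borel set E ⊂ ℝ^d by Per_α(E) = ∫_E ∫_{E^c} |x − y|^{−d−α} dx dy. Let E ⊂ ℝ^d be a Borel set with |E| < ∞ and such that Per_{α_0}(E) < ∞ for some α_0 ∈ (0,1). Then lim_{α→0⁺} α Per_α(E) = κ_{d−1} |E|, where κ_{d−1} = 2π^{d/2}/Γ(d/2) is the surface area of the unit sphere S^{d−1}. -/

import Mathlib

open MeasureTheory Filter Topology ENNReal

open Set Metric

section key
variable {d : ℕ}

noncomputable abbrev kappa (d : ℕ) : ℝ := 2 * Real.pi ^ ((d : ℝ) / 2) / Real.Gamma ((d : ℝ) / 2)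

lemma kappa_pos (hd : 1 ≤ d) : 0 < kappa d := by
  have h2 : 0 < (d : ℝ) / 2 := by positivity
  have := Real.Gamma_pos_of_pos h2
  have := Real.pi_pos
  positivity

lemma key_integral (hd : 1 ≤ d) {α : ℝ} (hα : 0 < α) :
    ∫⁻ x in (Metric.ball (0 : EuclideanSpace ℝ (Fin d)) 1)ᶜ,
      ENNReal.ofReal (‖x‖ ^ (-(d : ℝ) - α)) = ENNReal.ofReal (kappa d / α) := by
  haveI : Nontrivial (EuclideanSpace ℝ (Fin d)) :=
    Module.nontrivial_of_finrank_pos (R := ℝ) (by rw [finrank_euclideanSpace_fin]; omega)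
  set p : ℝ := -(d : ℝ) - α with hp
  have hpneg : p < 0 := by
    have : (0:ℝ) ≤ d := Nat.cast_nonneg d
    simp only [hp]; linarith
  set F : ℝ → ℝ := Set.indicator (Set.Ici 1) (fun r => r ^ p) with hF
  have hFnonneg : ∀ r, 0 ≤ F r := by
    intro r
    apply Set.indicator_nonneg
    intro r hr; exact Real.rpow_nonneg (le_trans zero_le_one hr) _
  have hiff : ∀ x : EuclideanSpace ℝ (Fin d),
      x ∈ (Metric.ball (0 : EuclideanSpace ℝ (Fin d)) 1)ᶜ ↔ ‖x‖ ∈ Set.Ici 1 := by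
    intro x; simp [Metric.mem_ball, dist_zero_right]
  -- Step A : rewrite as a whole-space lintegral
  have hA : ∫⁻ x in (Metric.ball (0 : EuclideanSpace ℝ (Fin d)) 1)ᶜ,
      ENNReal.ofReal (‖x‖ ^ p) =
      ∫⁻ x : EuclideanSpace ℝ (Fin d), ENNReal.ofReal (F ‖x‖) := by
    rw [← lintegral_indicator measurableSet_ball.compl]
    congr 1
    ext x
    by_cases h : ‖x‖ ∈ Set.Ici 1
    · rw [Set.indicator_of_mem ((hiff x).mpr h), hF, Set.indicator_of_mem h]
    · rw [Set.indicator_of_notMem (fun c => h ((hiff x).mp c)), hF,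
        Set.indicator_of_notMem h, ENNReal.ofReal_zero]
  -- Step B : integrability
  have hFnorm : (fun x : EuclideanSpace ℝ (Fin d) => F ‖x‖) =
      Set.indicator (Metric.ball (0 : EuclideanSpace ℝ (Fin d)) 1)ᶜ (fun x => ‖x‖ ^ p) := by
    ext x
    by_cases h : ‖x‖ ∈ Set.Ici 1
    · rw [hF, Set.indicator_of_mem h, Set.indicator_of_mem ((hiff x).mpr h)]
    · rw [hF, Set.indicator_of_notMem h,
        Set.indicator_of_notMem (fun c => h ((hiff x).mp c))]
  have hmeas : Measurable fun x : EuclideanSpace ℝ (Fin d) => F ‖x‖ := by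
    rw [hFnorm]
    exact Measurable.indicator (by fun_prop) measurableSet_ball.compl
  have hint : Integrable (fun x : EuclideanSpace ℝ (Fin d) => F ‖x‖) := by
    have hbig : Integrable (fun x : EuclideanSpace ℝ (Fin d) =>
        (2:ℝ) ^ ((d:ℝ) + α) * (1 + ‖x‖) ^ (-((d:ℝ) + α))) := by
      refine (integrable_one_add_norm ?_).const_mul _
      rw [finrank_euclideanSpace_fin]; linarith
    refine hbig.mono' hmeas.aestronglyMeasurable (Eventually.of_forall fun x => ?_)
    rw [Real.norm_of_nonneg (hFnonneg _)]
    by_cases h : ‖x‖ ∈ Set.Ici 1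
    · rw [hF, Set.indicator_of_mem h]
      have hx1 : (1:ℝ) ≤ ‖x‖ := h
      have hx0 : (0:ℝ) < ‖x‖ := lt_of_lt_of_le one_pos hx1
      have h2x : (1:ℝ) + ‖x‖ ≤ 2 * ‖x‖ := by linarith
      have key : ((2:ℝ) * ‖x‖) ^ (-((d:ℝ) + α)) ≤ (1 + ‖x‖) ^ (-((d:ℝ) + α)) :=
        Real.rpow_le_rpow_of_nonpos (by positivity) h2x (by simp only [neg_nonpos]; positivity)
      calc ‖x‖ ^ p = (2:ℝ) ^ ((d:ℝ)+α) * ((2:ℝ) * ‖x‖) ^ (-((d:ℝ) + α)) := by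
            rw [Real.mul_rpow (by norm_num) hx0.le, ← mul_assoc,
              ← Real.rpow_add (by norm_num : (0:ℝ) < 2), add_neg_cancel, Real.rpow_zero, one_mul]
            congr 1
            simp only [hp]; ring
        _ ≤ (2:ℝ) ^ ((d:ℝ)+α) * (1 + ‖x‖) ^ (-((d:ℝ) + α)) := by
            apply mul_le_mul_of_nonneg_left key (by positivity)
    · rw [hF, Set.indicator_of_notMem h]
      positivity
  -- Step C+D : polar coordinates
  have hC : ∫⁻ x : EuclideanSpace ℝ (Fin d), ENNReal.ofReal (F ‖x‖) =
      ENNReal.ofReal (∫ x : EuclideanSpace ℝ (Fin d), F ‖x‖) :=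
    (ofReal_integral_eq_lintegral_ofReal hint (Eventually.of_forall fun x => hFnonneg _)).symm
  have hD := integral_fun_norm_addHaar (volume : Measure (EuclideanSpace ℝ (Fin d))) F
  rw [hA, hC, hD]
  -- Step E : compute the radial integral
  have hdim : Module.finrank ℝ (EuclideanSpace ℝ (Fin d)) = d := finrank_euclideanSpace_fin
  rw [hdim]
  have hE : ∫ y in Set.Ioi (0:ℝ), y ^ (d - 1) • F y = 1 / α := by
    have h1 : ∀ y : ℝ, y ^ (d-1) • F y =
        Set.indicator (Set.Ici 1) (fun y : ℝ => y ^ (d-1) * y ^ p) y := by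
      intro y
      by_cases h : y ∈ Set.Ici 1
      · rw [hF, Set.indicator_of_mem h, Set.indicator_of_mem h, smul_eq_mul]
      · rw [hF, Set.indicator_of_notMem h, Set.indicator_of_notMem h, smul_eq_mul, mul_zero]
    simp_rw [h1]
    have hset : Set.Ioi (0:ℝ) ∩ Set.Ici 1 = Set.Ici 1 :=
      Set.inter_eq_self_of_subset_right (fun y hy => Set.mem_Ioi.mpr (lt_of_lt_of_le one_pos (Set.mem_Ici.mp hy)))
    rw [MeasureTheory.setIntegral_indicator measurableSet_Ici, hset,
      MeasureTheory.integral_Ici_eq_integral_Ioi]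
    rw [MeasureTheory.setIntegral_congr_fun measurableSet_Ioi
      (g := fun y : ℝ => y ^ (-1 - α)) ?_]
    · rw [integral_Ioi_rpow_of_lt (by linarith) one_pos, Real.one_rpow,
        div_eq_div_iff
          (by rw [show (-1:ℝ) - α + 1 = -α by ring]; exact neg_ne_zero.mpr hα.ne') hα.ne']
      ring
    · intro y hy
      have hy0 : (0:ℝ) < y := lt_trans one_pos hy
      show y ^ (d - 1) * y ^ p = y ^ (-1 - α)
      have : (y : ℝ) ^ (d - 1) = y ^ ((d:ℝ) - 1) := by
        rw [← Real.rpow_natCast y (d-1)]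
        congr 1
        rw [Nat.cast_sub hd, Nat.cast_one]
      rw [this, ← Real.rpow_add hy0]
      congr 1
      simp only [hp]; ring
  rw [hE]
  -- Step F : the constant
  haveI : Nonempty (Fin d) := ⟨⟨0, by omega⟩⟩
  rw [measureReal_def, EuclideanSpace.volume_ball]
  simp only [Fintype.card_fin, ENNReal.ofReal_one, one_pow, one_mul]
  rw [ENNReal.toReal_ofReal (by positivity)]
  rw [nsmul_eq_mul, smul_eq_mul]
  congr 1
  have hsqrt : Real.sqrt Real.pi ^ d = Real.pi ^ ((d:ℝ)/2) := by
    rw [Real.sqrt_eq_rpow, ← Real.rpow_natCast (Real.pi ^ ((1:ℝ)/2)) d,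
      ← Real.rpow_mul Real.pi_pos.le]
    congr 1; ring
  have h2 : (0:ℝ) < (d:ℝ)/2 := by positivity
  have hΓ : Real.Gamma ((d:ℝ)/2 + 1) = ((d:ℝ)/2) * Real.Gamma ((d:ℝ)/2) :=
    Real.Gamma_add_one (ne_of_gt h2)
  rw [hsqrt, hΓ]
  have hΓ0 : Real.Gamma ((d:ℝ)/2) ≠ 0 := ne_of_gt (Real.Gamma_pos_of_pos h2)
  have hd0 : (d:ℝ) ≠ 0 := by positivity
  field_simp
end key

lemma key_integral_shift (hd : 1 ≤ d) {α : ℝ} (hα : 0 < α)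
    (y : EuclideanSpace ℝ (Fin d)) :
    ∫⁻ x in (Metric.ball y 1)ᶜ,
      ENNReal.ofReal (‖x - y‖ ^ (-(d : ℝ) - α)) = ENNReal.ofReal (kappa d / α) := by
  rw [← lintegral_indicator measurableSet_ball.compl]
  have : ∀ x : EuclideanSpace ℝ (Fin d),
      (Metric.ball y 1)ᶜ.indicator (fun x => ENNReal.ofReal (‖x - y‖ ^ (-(d : ℝ) - α))) x =
      (Metric.ball (0 : EuclideanSpace ℝ (Fin d)) 1)ᶜ.indicator
        (fun z => ENNReal.ofReal (‖z‖ ^ (-(d : ℝ) - α))) (x - y) := by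
    intro x
    by_cases h : x ∈ (Metric.ball y 1)ᶜ
    · rw [Set.indicator_of_mem h, Set.indicator_of_mem]
      simpa [Metric.mem_ball, dist_eq_norm] using h
    · rw [Set.indicator_of_notMem h, Set.indicator_of_notMem]
      simpa [Metric.mem_ball, dist_eq_norm] using h
  simp_rw [this]
  rw [lintegral_sub_right_eq_self (fun z => (Metric.ball (0 : EuclideanSpace ℝ (Fin d)) 1)ᶜ.indicator
        (fun z => ENNReal.ofReal (‖z‖ ^ (-(d : ℝ) - α))) z) y]
  rw [lintegral_indicator measurableSet_ball.compl]
  exact key_integral hd hα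


section bounds
variable {d : ℕ}

lemma inner_upper (hd : 1 ≤ d) {E : Set (EuclideanSpace ℝ (Fin d))}
    (hE : MeasurableSet E) {α α₀ : ℝ} (hα : 0 < α) (hαα₀ : α ≤ α₀)
    (y : EuclideanSpace ℝ (Fin d)) :
    ∫⁻ x in Eᶜ, ENNReal.ofReal (‖x - y‖ ^ (-(d : ℝ) - α)) ≤
      (∫⁻ x in Eᶜ, ENNReal.ofReal (‖x - y‖ ^ (-(d : ℝ) - α₀))) +
        ENNReal.ofReal (kappa d / α) := by
  have hsplit := lintegral_inter_add_diff (μ := volume)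
    (fun x => ENNReal.ofReal (‖x - y‖ ^ (-(d : ℝ) - α))) Eᶜ
    (measurableSet_ball : MeasurableSet (Metric.ball y 1))
  rw [← hsplit]
  apply add_le_add
  · calc ∫⁻ x in Eᶜ ∩ Metric.ball y 1, ENNReal.ofReal (‖x - y‖ ^ (-(d : ℝ) - α))
        ≤ ∫⁻ x in Eᶜ ∩ Metric.ball y 1, ENNReal.ofReal (‖x - y‖ ^ (-(d : ℝ) - α₀)) := by
          apply setLIntegral_mono' (hE.compl.inter measurableSet_ball)
          intro x hx
          have hlt : ‖x - y‖ < 1 := by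
            simpa [Metric.mem_ball, dist_eq_norm] using hx.2
          rcases eq_or_lt_of_le (norm_nonneg (x - y)) with h0 | h0
          · rw [← h0, Real.zero_rpow (by have : (0:ℝ) ≤ d := Nat.cast_nonneg d; linarith), ENNReal.ofReal_zero]
            exact zero_le
          · exact ENNReal.ofReal_le_ofReal
              (Real.rpow_le_rpow_of_exponent_ge h0 hlt.le (by linarith))
      _ ≤ ∫⁻ x in Eᶜ, ENNReal.ofReal (‖x - y‖ ^ (-(d : ℝ) - α₀)) :=
          lintegral_mono_set Set.inter_subset_left
  · calc ∫⁻ x in Eᶜ \ Metric.ball y 1, ENNReal.ofReal (‖x - y‖ ^ (-(d : ℝ) - α))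
        ≤ ∫⁻ x in (Metric.ball y 1)ᶜ, ENNReal.ofReal (‖x - y‖ ^ (-(d : ℝ) - α)) :=
          lintegral_mono_set (Set.diff_subset_compl _ _)
      _ = ENNReal.ofReal (kappa d / α) := key_integral_shift hd hα y

lemma inner_lower (hd : 1 ≤ d) {E : Set (EuclideanSpace ℝ (Fin d))}
    (hE : MeasurableSet E) {α : ℝ} (hα : 0 < α)
    (y : EuclideanSpace ℝ (Fin d)) :
    ENNReal.ofReal (kappa d / α) - volume E ≤
      ∫⁻ x in Eᶜ, ENNReal.ofReal (‖x - y‖ ^ (-(d : ℝ) - α)) := by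
  rw [tsub_le_iff_right]
  have hsplit := lintegral_inter_add_diff (μ := volume)
    (fun x => ENNReal.ofReal (‖x - y‖ ^ (-(d : ℝ) - α))) (Metric.ball y 1)ᶜ hE
  calc ENNReal.ofReal (kappa d / α)
      = ∫⁻ x in (Metric.ball y 1)ᶜ, ENNReal.ofReal (‖x - y‖ ^ (-(d : ℝ) - α)) :=
        (key_integral_shift hd hα y).symm
    _ = (∫⁻ x in (Metric.ball y 1)ᶜ ∩ E, ENNReal.ofReal (‖x - y‖ ^ (-(d : ℝ) - α)))
        + ∫⁻ x in (Metric.ball y 1)ᶜ \ E, ENNReal.ofReal (‖x - y‖ ^ (-(d : ℝ) - α)) :=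
        hsplit.symm
    _ ≤ volume E + ∫⁻ x in Eᶜ, ENNReal.ofReal (‖x - y‖ ^ (-(d : ℝ) - α)) := by
        apply add_le_add
        · calc (∫⁻ x in (Metric.ball y 1)ᶜ ∩ E,
                ENNReal.ofReal (‖x - y‖ ^ (-(d : ℝ) - α)))
              ≤ ∫⁻ _ in (Metric.ball y 1)ᶜ ∩ E, (1 : ℝ≥0∞) := by
                apply setLIntegral_mono' (measurableSet_ball.compl.inter hE)
                intro x hx
                have h1 : 1 ≤ ‖x - y‖ := by
                  have := hx.1
                  simp only [Set.mem_compl_iff, Metric.mem_ball, dist_eq_norm, not_lt] at this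
                  exact this
                calc ENNReal.ofReal (‖x - y‖ ^ (-(d : ℝ) - α))
                    ≤ ENNReal.ofReal 1 := ENNReal.ofReal_le_ofReal
                      (Real.rpow_le_one_of_one_le_of_nonpos h1
                        (by have : (0:ℝ) ≤ d := Nat.cast_nonneg d; linarith))
                  _ = 1 := ENNReal.ofReal_one
            _ = volume ((Metric.ball y 1)ᶜ ∩ E) := setLIntegral_one _
            _ ≤ volume E := measure_mono Set.inter_subset_right
        · exact lintegral_mono_set (fun x hx => hx.2)
    _ = (∫⁻ x in Eᶜ, ENNReal.ofReal (‖x - y‖ ^ (-(d : ℝ) - α))) + volume E := add_comm _ _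

end bounds

/-- The fractional `α`-perimeter `Per_α(E) = ∫_E ∫_{Eᶜ} |x − y|^{−d−α} dx dy`. -/
noncomputable def fracPer {d : ℕ} (α : ℝ) (E : Set (EuclideanSpace ℝ (Fin d))) :
    ℝ≥0∞ :=
  ∫⁻ y in E, ∫⁻ x in Eᶜ, ENNReal.ofReal (‖x - y‖ ^ (-(d : ℝ) - α))

/-- Convergence of fractional perimeters as `α ↓ 0`: if `E ⊂ ℝ^d` is Borel with
`|E| < ∞` and `Per_{α₀}(E) < ∞` for some `α₀ ∈ (0,1)`, then
`α Per_α(E) → κ_{d−1} |E|` where `κ_{d−1} = 2π^{d/2}/Γ(d/2)`. -/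
theorem statement13 {d : ℕ} (hd : 1 ≤ d)
    (E : Set (EuclideanSpace ℝ (Fin d)))
    (hE : MeasurableSet E) (hEvol : volume E < ⊤)
    (α₀ : ℝ) (hα₀ : α₀ ∈ Set.Ioo (0 : ℝ) 1) (hPer₀ : fracPer α₀ E < ⊤) :
    Tendsto (fun α : ℝ => ENNReal.ofReal α * fracPer α E)
      (𝓝[Set.Ioo (0 : ℝ) 1] 0)
      (𝓝 (ENNReal.ofReal (2 * Real.pi ^ ((d : ℝ) / 2) / Real.Gamma ((d : ℝ) / 2)) *
        volume E)) := by
  have hEtop : volume E ≠ ⊤ := hEvol.ne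
  set κ : ℝ := kappa d with hκdef
  -- limits of the bounding functions
  have h0 : Tendsto (fun α : ℝ => ENNReal.ofReal α) (𝓝[Set.Ioo (0:ℝ) 1] 0) (𝓝 0) := by
    have : Tendsto (fun α : ℝ => α) (𝓝[Set.Ioo (0:ℝ) 1] 0) (𝓝 0) :=
      tendsto_id.mono_left nhdsWithin_le_nhds
    simpa using ENNReal.tendsto_ofReal this
  have hmulE : Tendsto (fun α : ℝ => ENNReal.ofReal α * volume E)
      (𝓝[Set.Ioo (0:ℝ) 1] 0) (𝓝 0) := by
    simpa using ENNReal.Tendsto.mul_const h0 (Or.inr hEtop)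
  have hL : Tendsto (fun α : ℝ => (ENNReal.ofReal κ - ENNReal.ofReal α * volume E) * volume E)
      (𝓝[Set.Ioo (0:ℝ) 1] 0) (𝓝 (ENNReal.ofReal κ * volume E)) := by
    have hsub : Tendsto (fun α : ℝ => ENNReal.ofReal κ - ENNReal.ofReal α * volume E)
        (𝓝[Set.Ioo (0:ℝ) 1] 0) (𝓝 (ENNReal.ofReal κ - 0)) :=
      ENNReal.Tendsto.sub tendsto_const_nhds hmulE (Or.inl ENNReal.ofReal_ne_top)
    rw [tsub_zero] at hsub
    exact ENNReal.Tendsto.mul_const hsub (Or.inr hEtop)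
  have hU : Tendsto (fun α : ℝ => ENNReal.ofReal α * fracPer α₀ E + ENNReal.ofReal κ * volume E)
      (𝓝[Set.Ioo (0:ℝ) 1] 0) (𝓝 (ENNReal.ofReal κ * volume E)) := by
    have := (ENNReal.Tendsto.mul_const h0 (Or.inr hPer₀.ne)).add
      (tendsto_const_nhds (x := ENNReal.ofReal κ * volume E))
    simpa using this
  -- eventual bounds
  have hev : ∀ᶠ α in 𝓝[Set.Ioo (0:ℝ) 1] 0, α ∈ Set.Ioo (0:ℝ) 1 ∧ α < α₀ := by
    filter_upwards [eventually_mem_nhdsWithin,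
      eventually_nhdsWithin_of_eventually_nhds (tendsto_id.eventually_lt_const hα₀.1)]
      with α h1 h2
    exact ⟨h1, h2⟩
  refine tendsto_of_tendsto_of_tendsto_of_le_of_le' hL hU ?_ ?_
  · filter_upwards [hev] with α ⟨hmem, _⟩
    have hα : 0 < α := hmem.1
    have hlow : (ENNReal.ofReal (κ / α) - volume E) * volume E ≤ fracPer α E := by
      calc (ENNReal.ofReal (κ / α) - volume E) * volume E
          = ∫⁻ _ in E, (ENNReal.ofReal (κ / α) - volume E) := (setLIntegral_const _ _).symm
        _ ≤ fracPer α E := lintegral_mono fun y => inner_lower hd hE hα y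
    calc (ENNReal.ofReal κ - ENNReal.ofReal α * volume E) * volume E
        = (ENNReal.ofReal α * ENNReal.ofReal (κ / α) - ENNReal.ofReal α * volume E) *
            volume E := by
          rw [← ENNReal.ofReal_mul hα.le, mul_div_cancel₀ _ hα.ne']
      _ ≤ (ENNReal.ofReal α * (ENNReal.ofReal (κ / α) - volume E)) * volume E := by
          gcongr
          rw [tsub_le_iff_right, ← mul_add]
          exact mul_le_mul_right (le_tsub_add) _
      _ = ENNReal.ofReal α * ((ENNReal.ofReal (κ / α) - volume E) * volume E) := by
          rw [mul_assoc]
      _ ≤ ENNReal.ofReal α * fracPer α E := mul_le_mul_right hlow _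
  · filter_upwards [hev] with α ⟨hmem, hlt⟩
    have hα : 0 < α := hmem.1
    have hup : fracPer α E ≤ fracPer α₀ E + ENNReal.ofReal (κ / α) * volume E := by
      calc fracPer α E
          ≤ ∫⁻ y in E, ((∫⁻ x in Eᶜ, ENNReal.ofReal (‖x - y‖ ^ (-(d : ℝ) - α₀)))
              + ENNReal.ofReal (κ / α)) :=
            lintegral_mono fun y => inner_upper hd hE hα hlt.le y
        _ = fracPer α₀ E + ENNReal.ofReal (κ / α) * volume E := by
            rw [lintegral_add_right' _ aemeasurable_const, setLIntegral_const]
            rfl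
    calc ENNReal.ofReal α * fracPer α E
        ≤ ENNReal.ofReal α * (fracPer α₀ E + ENNReal.ofReal (κ / α) * volume E) :=
          mul_le_mul_right hup _
      _ = ENNReal.ofReal α * fracPer α₀ E
          + (ENNReal.ofReal α * ENNReal.ofReal (κ / α)) * volume E := by ring
      _ = ENNReal.ofReal α * fracPer α₀ E + ENNReal.ofReal κ * volume E := by
          rw [← ENNReal.ofReal_mul hα.le, mul_div_cancel₀ _ hα.ne']
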